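/- Let (I_j)_{j∈J} be a finite family of independent Bernoulli random variables with P(I_j = 1) = λ_j, and (P_j)_{j∈J} an independent family of Poisson random variables with E[P_j] = λ_j, where all λ_j ∈ (0,1). Then there exists a coupling of the two families such that P(∃ j ∈ J : I_j ≠ P_j) ≤ 2·Σ_{j∈J} λ_j². -/

import Mathlib

open MeasureTheory ProbabilityTheory
open scoped ENNReal

lemma pi_map_coord {ι : Type*} [Fintype ι] {α β : ι → Type*}
    [∀ i, MeasurableSpace (α i)] [∀ i, MeasurableSpace (β i)]
    (μ : ∀ i, Measure (α i)) [∀ i, IsProbabilityMeasure (μ i)]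
    (g : ∀ i, α i → β i) (hg : ∀ i, Measurable (g i)) :
    (Measure.pi μ).map (fun f i => g i (f i)) = Measure.pi (fun i => (μ i).map (g i)) := by
  have hmeas : Measurable (fun f : (∀ i, α i) => fun i => g i (f i)) :=
    measurable_pi_lambda _ fun i => (hg i).comp (measurable_pi_apply i)
  have : ∀ i, IsProbabilityMeasure ((μ i).map (g i)) :=
    fun i => Measure.isProbabilityMeasure_map (hg i).aemeasurable
  refine (Measure.pi_eq fun s hs => ?_).symm
  rw [Measure.map_apply hmeas (MeasurableSet.univ_pi hs)]
  have hpre : (fun f : (∀ i, α i) => fun i => g i (f i)) ⁻¹' Set.pi Set.univ s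
      = Set.pi Set.univ (fun i => g i ⁻¹' s i) := by
    ext f; simp [Set.mem_pi]
  rw [hpre, Measure.pi_pi]
  exact Finset.prod_congr rfl fun i _ => (Measure.map_apply (hg i) (hs i)).symm

section single
variable (l : ℝ) (hl0 : 0 < l) (hl1 : l < 1)

noncomputable def rE (l : ℝ) : ℝ≥0∞ := ENNReal.ofReal ((l - 1 + Real.exp (-l)) / Real.exp (-l))

lemma hexp_ge (l : ℝ) : 1 - l ≤ Real.exp (-l) := by
  have := Real.add_one_le_exp (-l); linarith

lemma rE_le_one (hl1 : l < 1) : rE l ≤ 1 := by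
  have he : (0:ℝ) < Real.exp (-l) := Real.exp_pos _
  rw [rE, ← ENNReal.ofReal_one]
  exact ENNReal.ofReal_le_ofReal ((div_le_one he).mpr (by linarith))

lemma coe_rE (l : ℝ) : ((rE l).toNNReal : ℝ≥0∞) = rE l :=
  ENNReal.coe_toNNReal ENNReal.ofReal_ne_top

lemma rE_le_one' (l : ℝ) (hl1 : l < 1) : (rE l).toNNReal ≤ 1 := by
  simpa using ENNReal.toNNReal_mono ENNReal.one_ne_top (rE_le_one l hl1)

noncomputable def couplingPMF (l : ℝ) (hl1 : l < 1) : PMF (ℕ × ℕ) :=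
  (poissonPMF l.toNNReal).bind fun n =>
    (PMF.bernoulli (rE l).toNNReal (rE_le_one' l hl1)).map
      (fun b => ((if n = 0 then (if b then 1 else 0) else 1 : ℕ), n))

end single

lemma bind_ite_apply (p : PMF ℕ) (A Q : PMF ℕ) (k : ℕ) :
    (p.bind fun n => if n = 0 then A else Q) k = p 0 * A k + (1 - p 0) * Q k := by
  have hptop : p 0 ≠ ⊤ := (p.apply_lt_top 0).ne
  rw [PMF.bind_apply, tsum_eq_zero_add' ENNReal.summable]
  simp only [Nat.succ_ne_zero, if_false, if_pos rfl, Nat.add_eq_zero, and_false]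
  rw [ENNReal.tsum_mul_right]
  have hs0 : (∑' n : ℕ, p (n + 1)) = 1 - p 0 := by
    have h1 : p 0 + (∑' n : ℕ, p (n + 1)) = 1 := by
      rw [← tsum_eq_zero_add' ENNReal.summable]; exact p.tsum_coe
    rw [← h1, ENNReal.add_sub_cancel_left hptop]
  rw [hs0]; simp

section single2
variable (l : ℝ)

theorem single_coupling (hl0 : 0 < l) (hl1 : l < 1) (h : l.toNNReal ≤ 1) :
    ∃ ν : Measure (ℕ × ℕ), IsProbabilityMeasure ν ∧
      ν.map Prod.fst =
        ((PMF.bernoulli l.toNNReal h).map (fun b => if b then 1 else 0)).toMeasure ∧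
      ν.map Prod.snd = poissonMeasure l.toNNReal ∧
      ν {p : ℕ × ℕ | p.1 ≠ p.2} ≤ ENNReal.ofReal (2 * l ^ 2) := by
  set e := Real.exp (-l) with he_def
  have he0 : (0:ℝ) < e := Real.exp_pos _
  have he1 : e ≤ 1 := by
    rw [he_def, ← Real.exp_zero]; exact Real.exp_le_exp.mpr (by linarith)
  have hge : 1 - l ≤ e := hexp_ge l
  have hcoe : (l.toNNReal : ℝ) = l := Real.coe_toNNReal _ hl0.le
  set P := poissonPMF l.toNNReal with hP_def
  set B := PMF.bernoulli (rE l).toNNReal (rE_le_one' l hl1) with hB_def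
  have hP0 : P 0 = ENNReal.ofReal e := by
    show ENNReal.ofReal (poissonPMFReal l.toNNReal 0) = _
    rw [poissonPMFReal]; rw [hcoe]; norm_num; rw [← he_def]
  have hP1 : P 1 = ENNReal.ofReal (e * l) := by
    show ENNReal.ofReal (poissonPMFReal l.toNNReal 1) = _
    rw [poissonPMFReal]; rw [hcoe]; norm_num; rw [← he_def]
  have hP0top : P 0 ≠ ⊤ := by rw [hP0]; exact ENNReal.ofReal_ne_top
  have h1mB : (1 : ℝ≥0∞) - rE l = ENNReal.ofReal ((1 - l) / e) := by
    rw [rE, ← ENNReal.ofReal_one, ← ENNReal.ofReal_sub _ (div_nonneg (by linarith) he0.le)]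
    congr 1; field_simp; linarith
  have hp00E : P 0 * (1 - rE l) = ENNReal.ofReal (1 - l) := by
    rw [hP0, h1mB, ← ENNReal.ofReal_mul he0.le]
    congr 1; field_simp
  have hP0rE : P 0 * rE l = ENNReal.ofReal (l - 1 + e) := by
    rw [hP0, rE, ← ENNReal.ofReal_mul he0.le]
    congr 1; field_simp; rw [← he_def]
  have h1mP0 : (1:ℝ≥0∞) - P 0 = ENNReal.ofReal (1 - e) := by
    rw [hP0, ← ENNReal.ofReal_one, ← ENNReal.ofReal_sub _ he0.le]
  -- singleton values
  have hBsum : B false + B true = 1 := by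
    simp only [hB_def, PMF.bernoulli_apply, cond_false, cond_true, ENNReal.coe_sub, ENNReal.coe_one, coe_rE]
    exact tsub_add_cancel_of_le (rE_le_one l hl1)
  have h00 : couplingPMF l hl1 (0, 0) = P 0 * (1 - rE l) := by
    rw [couplingPMF, PMF.bind_apply]
    rw [tsum_eq_single 0 (fun n hn => by
      simp [PMF.map_apply, tsum_bool, Prod.ext_iff, (Ne.symm hn)])]
    congr 1
    rw [PMF.map_apply, tsum_bool]
    simp [PMF.bernoulli_apply, Prod.ext_iff, coe_rE]
  have h11 : couplingPMF l hl1 (1, 1) = P 1 := by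
    rw [couplingPMF, PMF.bind_apply]
    rw [tsum_eq_single 1 (fun n hn => by
      simp [PMF.map_apply, tsum_bool, Prod.ext_iff, (Ne.symm hn)])]
    rw [PMF.map_apply, tsum_bool]
    norm_num
    rw [show (PMF.bernoulli (rE l).toNNReal (rE_le_one' l hl1)) false + (PMF.bernoulli (rE l).toNNReal (rE_le_one' l hl1)) true = 1 from hBsum, mul_one]
  -- marginals
  have hsnd : (couplingPMF l hl1).map Prod.snd = P := by
    rw [couplingPMF, PMF.map_bind]
    have hc : ∀ n : ℕ,
        ((B.map fun b => ((if n = 0 then (if b then 1 else 0) else 1 : ℕ), n)).map Prod.snd)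
          = PMF.pure n := by
      intro n; rw [PMF.map_comp]; exact PMF.map_const B n
    simp_rw [← hB_def, hc]
    exact PMF.bind_pure _
  have hfst : (couplingPMF l hl1).map Prod.fst
      = (PMF.bernoulli l.toNNReal h).map (fun b => if b then 1 else 0) := by
    rw [couplingPMF, PMF.map_bind]
    have hin : ∀ n : ℕ,
        ((B.map fun b => ((if n = 0 then (if b then 1 else 0) else 1 : ℕ), n)).map Prod.fst)
          = if n = 0 then B.map (fun b => if b then 1 else 0) else PMF.pure 1 := by
      intro n
      rw [PMF.map_comp]
      by_cases hn : n = 0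
      · subst hn; simp only [if_pos rfl]; rfl
      · simp only [if_neg hn]; exact PMF.map_const B 1
    simp_rw [← hB_def, hin]
    refine PMF.ext fun k => ?_
    rw [bind_ite_apply, ← hP_def]
    have hA : (B.map fun b => if b then 1 else 0) k
        = (if k = 0 then 1 - rE l else 0) + (if k = 1 then rE l else 0) := by
      rw [PMF.map_apply, tsum_bool]; norm_num; try rfl
    have hT : ((PMF.bernoulli l.toNNReal h).map fun b => if b then 1 else 0) k
        = (if k = 0 then 1 - ENNReal.ofReal l else 0)
          + (if k = 1 then ENNReal.ofReal l else 0) := by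
      rw [PMF.map_apply, tsum_bool]; norm_num; try rfl
    rw [hA, hT, PMF.pure_apply]
    rcases k with _ | _ | k
    · norm_num
      rw [hp00E, ENNReal.ofReal_sub _ hl0.le, ENNReal.ofReal_one]
    · norm_num
      rw [hP0rE, h1mP0, ← ENNReal.ofReal_add (by linarith) (by linarith)]
      congr 1; ring
    · norm_num
  -- mismatch bound
  set ν := (couplingPMF l hl1).toMeasure with hν_def
  have hmismatch : ν {p : ℕ × ℕ | p.1 ≠ p.2} ≤ ENNReal.ofReal (2 * l ^ 2) := by
    have hmeasset : ∀ s : Set (ℕ × ℕ), MeasurableSet s :=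
      fun s => (Set.to_countable s).measurableSet
    have hpair : ν {((0,0) : ℕ × ℕ), ((1,1) : ℕ × ℕ)}
        = ENNReal.ofReal (1 - l) + ENNReal.ofReal (e * l) := by
      rw [Set.insert_eq, measure_union (by simp) (measurableSet_singleton _),
        PMF.toMeasure_apply_singleton _ _ (measurableSet_singleton _),
        PMF.toMeasure_apply_singleton _ _ (measurableSet_singleton _),
        h00, h11, hp00E, hP1]
    have hmono : ν {((0,0) : ℕ × ℕ), ((1,1) : ℕ × ℕ)} ≤ ν {p : ℕ × ℕ | p.1 = p.2} := by
      refine measure_mono ?_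
      simp only [Set.insert_subset_iff, Set.singleton_subset_iff]
      exact ⟨rfl, rfl⟩
    calc ν {p : ℕ × ℕ | p.1 ≠ p.2}
        = 1 - ν {p : ℕ × ℕ | p.1 = p.2} := by
          rw [show {p : ℕ × ℕ | p.1 ≠ p.2} = {p : ℕ × ℕ | p.1 = p.2}ᶜ from rfl,
            measure_compl (hmeasset _) (measure_ne_top _ _), measure_univ]
      _ ≤ 1 - ν {((0,0) : ℕ × ℕ), ((1,1) : ℕ × ℕ)} := tsub_le_tsub_left hmono 1
      _ = 1 - ENNReal.ofReal ((1 - l) + e * l) := by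
          rw [hpair, ENNReal.ofReal_add (by linarith) (by positivity)]
      _ ≤ ENNReal.ofReal (2 * l ^ 2) := by
          rw [tsub_le_iff_right, ← ENNReal.ofReal_add (by positivity) (by nlinarith)]
          rw [ENNReal.one_le_ofReal]
          nlinarith [hge, hl0, sq_nonneg l]
  refine ⟨ν, PMF.toMeasure.isProbabilityMeasure _, ?_, ?_, hmismatch⟩
  · rw [hν_def, PMF.toMeasure_map _ _ measurable_fst, hfst]
  · rw [hν_def, PMF.toMeasure_map _ _ measurable_snd, hsnd]
    refine Measure.ext_iff_singleton.mpr fun n => ?_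
    rw [PMF.toMeasure_apply_singleton _ _ (measurableSet_singleton _), poissonMeasure_singleton]; rfl

end single2

/-- a finite family of independent Bernoulli variables `(I_j)` with
parameters `λ_j ∈ (0,1)` and an independent family of Poisson variables `(P_j)` with
the same means can be coupled so that `P(∃ j, I_j ≠ P_j) ≤ 2·Σ_j λ_j²`. -/
theorem family_poisson_bernoulli_coupling {ι : Type*} [Fintype ι]
    (lam : ι → ℝ) (hlam : ∀ j, lam j ∈ Set.Ioo (0:ℝ) 1) :
    ∃ μ : Measure ((ι → ℕ) × (ι → ℕ)), IsProbabilityMeasure μ ∧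
      -- the first marginal is the product of the Bernoulli(λ_j) laws (as ℕ-valued)
      μ.map Prod.fst = Measure.pi (fun j =>
        ((PMF.bernoulli (lam j).toNNReal
            (Real.toNNReal_le_one.mpr (hlam j).2.le)).map
          (fun b => if b then 1 else 0)).toMeasure) ∧
      -- the second marginal is the product of the Poisson(λ_j) laws
      μ.map Prod.snd = Measure.pi (fun j => poissonMeasure (lam j).toNNReal) ∧
      μ {q : (ι → ℕ) × (ι → ℕ) | ∃ j, q.1 j ≠ q.2 j} ≤
        ENNReal.ofReal (2 * ∑ j, lam j ^ 2) := by
  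
  classical
  have hex : ∀ j : ι, ∃ ν : Measure (ℕ × ℕ), IsProbabilityMeasure ν ∧
      ν.map Prod.fst = ((PMF.bernoulli (lam j).toNNReal
          (Real.toNNReal_le_one.mpr (hlam j).2.le)).map
        (fun b => if b then 1 else 0)).toMeasure ∧
      ν.map Prod.snd = poissonMeasure (lam j).toNNReal ∧
      ν {p : ℕ × ℕ | p.1 ≠ p.2} ≤ ENNReal.ofReal (2 * lam j ^ 2) :=
    fun j => single_coupling (lam j) (hlam j).1 (hlam j).2 _
  choose ν hνprob hνfst hνsnd hνmis using hex
  haveI := hνprob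
  set T : (∀ _ : ι, ℕ × ℕ) → (ι → ℕ) × (ι → ℕ) :=
    fun f => (fun j => (f j).1, fun j => (f j).2) with hT_def
  have hTmeas : Measurable T :=
    Measurable.prod
      (measurable_pi_lambda _ fun j => measurable_fst.comp (measurable_pi_apply j))
      (measurable_pi_lambda _ fun j => measurable_snd.comp (measurable_pi_apply j))
  refine ⟨(Measure.pi ν).map T, Measure.isProbabilityMeasure_map hTmeas.aemeasurable, ?_, ?_, ?_⟩
  · rw [Measure.map_map measurable_fst hTmeas]
    have : (Prod.fst ∘ T) = fun f (j : ι) => Prod.fst (f j) := rfl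
    rw [this, pi_map_coord ν (fun _ => Prod.fst) (fun _ => measurable_fst)]
    exact congrArg Measure.pi (funext fun j => hνfst j)
  · rw [Measure.map_map measurable_snd hTmeas]
    have : (Prod.snd ∘ T) = fun f (j : ι) => Prod.snd (f j) := rfl
    rw [this, pi_map_coord ν (fun _ => Prod.snd) (fun _ => measurable_snd)]
    exact congrArg Measure.pi (funext fun j => hνsnd j)
  · have hmeasS : MeasurableSet {q : (ι → ℕ) × (ι → ℕ) | ∃ j, q.1 j ≠ q.2 j} :=
      (Set.to_countable _).measurableSet
    rw [Measure.map_apply hTmeas hmeasS]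
    have hpre : T ⁻¹' {q : (ι → ℕ) × (ι → ℕ) | ∃ j, q.1 j ≠ q.2 j}
        = ⋃ j : ι, Function.eval j ⁻¹' {p : ℕ × ℕ | p.1 ≠ p.2} := by
      ext f
      simp [hT_def, Function.eval]
    rw [hpre]
    calc Measure.pi ν (⋃ j : ι, Function.eval j ⁻¹' {p : ℕ × ℕ | p.1 ≠ p.2})
        ≤ ∑' j : ι, Measure.pi ν (Function.eval j ⁻¹' {p : ℕ × ℕ | p.1 ≠ p.2}) :=
          measure_iUnion_le _
      _ = ∑ j : ι, Measure.pi ν (Function.eval j ⁻¹' {p : ℕ × ℕ | p.1 ≠ p.2}) :=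
          tsum_fintype _
      _ ≤ ∑ j : ι, ENNReal.ofReal (2 * lam j ^ 2) := by
          refine Finset.sum_le_sum fun j _ => ?_
          have hev : Function.eval j ⁻¹' {p : ℕ × ℕ | p.1 ≠ p.2}
              = Set.pi Set.univ
                (Function.update (fun _ : ι => (Set.univ : Set (ℕ × ℕ))) j
                  {p : ℕ × ℕ | p.1 ≠ p.2}) := Set.eval_preimage
          rw [hev, Measure.pi_pi]
          rw [Finset.prod_eq_single j
            (fun i _ hi => by rw [Function.update_of_ne hi]; exact measure_univ)
            (fun hj => absurd (Finset.mem_univ j) hj)]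
          rw [Function.update_self]
          exact hνmis j
      _ ≤ ENNReal.ofReal (2 * ∑ j, lam j ^ 2) := by
          rw [Finset.mul_sum]
          rw [← ENNReal.ofReal_sum_of_nonneg (fun j _ => by positivity)]
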